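/- Let m ∈ ℕ, s ∈ ℤ, and let p ∈ 𝒫_m be a homogeneous polynomial of degree m on ℝ³. Then for every x ∈ ℝ³ with x ≠ 0, Δ(‖x‖^s p(x)) = ‖x‖^{s−2} ( s(s+1+2m) p(x) + ‖x‖² (Δp)(x) ). -/

import Mathlib

noncomputable section

/-- ℝ³ with the Euclidean norm. -/
abbrev E3 := EuclideanSpace ℝ (Fin 3)

/-- The `i`-th partial derivative of a function on ℝ³. -/
def pd (i : Fin 3) (f : E3 → ℝ) : E3 → ℝ :=
  fun x => fderiv ℝ f x (EuclideanSpace.single i 1)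

/-- The flat Laplacian on ℝ³. -/
def lap (f : E3 → ℝ) : E3 → ℝ :=
  fun x => ∑ i : Fin 3, pd i (pd i f) x

/-- `p : ℝ³ → ℝ` is (the evaluation of) a homogeneous polynomial of degree `m`
in the three coordinates. -/
def IsHomogPoly (m : ℕ) (p : E3 → ℝ) : Prop :=
  ∃ P : MvPolynomial (Fin 3) ℝ, P.IsHomogeneous m ∧
    ∀ x : E3, p x = MvPolynomial.eval (fun i => x i) P

open MvPolynomial

lemma evalP_hasFDerivAt (P : MvPolynomial (Fin 3) ℝ) (x : E3) :
    HasFDerivAt (fun y : E3 => eval (fun i => y i) P)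
      (∑ i : Fin 3, (eval (fun j => x j) (pderiv i P)) • (EuclideanSpace.proj i : E3 →L[ℝ] ℝ)) x := by
  induction P using MvPolynomial.induction_on with
  | C a => simpa using hasFDerivAt_const a x
  | add p q hp hq =>
      have := hp.add hq
      simp only [eval_add, map_add] at this ⊢
      refine this.congr_fderiv (Eq.symm ?_)
      rw [← Finset.sum_add_distrib]
      congr 1; funext i; rw [add_smul]
  | mul_X p n hp =>
      have h2 : HasFDerivAt (fun y : E3 => y n) (EuclideanSpace.proj n : E3 →L[ℝ] ℝ) x :=
        (EuclideanSpace.proj n : E3 →L[ℝ] ℝ).hasFDerivAt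
      have := hp.mul h2
      simp only [eval_mul, eval_X] at this ⊢
      refine this.congr_fderiv (Eq.symm ?_)
      ext v
      simp only [ContinuousLinearMap.sum_apply, ContinuousLinearMap.smul_apply,
        ContinuousLinearMap.add_apply, pderiv_mul, eval_add, eval_mul, eval_X, pderiv_X]
      simp only [Pi.single_apply, apply_ite, map_one, map_zero, smul_eq_mul,
        PiLp.proj_apply, add_mul, mul_ite, mul_one, mul_zero, ite_mul, zero_mul,
        Finset.sum_add_distrib, Finset.sum_ite_eq, Finset.mem_univ, if_true, Finset.mul_sum]
      have h3 : ∀ j : Fin 3,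
          (if n = j then (eval fun k => x k) ((pderiv j) p) * x n * v j + (eval fun k => x k) p * v j
            else (eval fun k => x k) ((pderiv j) p) * x n * v j + 0)
          = x n * ((eval fun k => x k) ((pderiv j) p) * v j)
            + (if n = j then v j * (eval fun k => x k) p else 0) := by
        intro j; split <;> ring
      rw [Finset.sum_congr rfl fun j _ => h3 j, Finset.sum_add_distrib, Finset.sum_ite_eq]
      simp only [Finset.mem_univ, if_true]
      ring

lemma evalP_differentiable (P : MvPolynomial (Fin 3) ℝ) :
    Differentiable ℝ (fun y : E3 => eval (fun i => y i) P) :=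
  fun x => (evalP_hasFDerivAt P x).differentiableAt

lemma pd_evalP (P : MvPolynomial (Fin 3) ℝ) (i : Fin 3) :
    pd i (fun y : E3 => eval (fun i => y i) P)
      = fun y : E3 => eval (fun j => y j) (pderiv i P) := by
  funext x
  unfold pd
  rw [(evalP_hasFDerivAt P x).fderiv]
  simp [EuclideanSpace.single_apply, Finset.sum_ite_eq, eq_comm]

lemma eval_smul_homog {m : ℕ} {P : MvPolynomial (Fin 3) ℝ} (hP : P.IsHomogeneous m)
    (t : ℝ) (x : Fin 3 → ℝ) :
    eval (fun i => t * x i) P = t ^ m * eval x P := by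
  rw [eval_eq', eval_eq', Finset.mul_sum]
  refine Finset.sum_congr rfl fun d hd => ?_
  have hdeg : ∑ i : Fin 3, d i = m := by
    have h := hP (mem_support_iff.mp hd)
    rw [← h, Finsupp.weight_apply, Finsupp.sum_fintype _ _ (by simp)]
    simp [mul_comm]
  calc coeff d P * ∏ i : Fin 3, (t * x i) ^ d i
      = coeff d P * ((∏ i : Fin 3, t ^ d i) * ∏ i : Fin 3, x i ^ d i) := by
        rw [← Finset.prod_mul_distrib]; simp [mul_pow]
    _ = t ^ m * (coeff d P * ∏ i : Fin 3, x i ^ d i) := by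
        rw [Finset.prod_pow_eq_pow_sum, hdeg]; ring

lemma euler {m : ℕ} {P : MvPolynomial (Fin 3) ℝ} (hP : P.IsHomogeneous m) (x : E3) :
    ∑ i : Fin 3, x i * eval (fun j => x j) (pderiv i P) = m * eval (fun j => x j) P := by
  have hc : HasDerivAt (fun t : ℝ => (t • x : E3)) x 1 := by
    simpa using (hasDerivAt_id (1:ℝ)).smul_const x
  have h1 : HasDerivAt (fun t : ℝ => eval (fun i => (t • x : E3) i) P)
      ((∑ i : Fin 3, (eval (fun j => x j) (pderiv i P)) • (EuclideanSpace.proj i : E3 →L[ℝ] ℝ)) x)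
      1 := by
    have hx1 : HasFDerivAt (fun y : E3 => eval (fun i => y i) P)
        (∑ i : Fin 3, (eval (fun j => x j) (pderiv i P)) • (EuclideanSpace.proj i : E3 →L[ℝ] ℝ))
        ((1:ℝ) • x) := by simpa using evalP_hasFDerivAt P x
    have := hx1.comp_hasDerivAt 1 hc
    simpa [Function.comp_def] using this
  have h2 : HasDerivAt (fun t : ℝ => t ^ m * eval (fun j => x j) P)
      (m * eval (fun j => x j) P) 1 := by
    simpa using (hasDerivAt_pow m (1:ℝ)).mul_const (eval (fun j => x j) P)
  have hfun : (fun t : ℝ => eval (fun i => (t • x : E3) i) P)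
      = fun t : ℝ => t ^ m * eval (fun j => x j) P := by
    funext t
    have : (fun i => (t • x : E3) i) = fun i => t * x i := by
      funext i; simp [PiLp.smul_apply]
    rw [this, eval_smul_homog hP]
  rw [hfun] at h1
  have := h1.unique h2
  rw [← this]
  simp [mul_comm]

lemma norm_rpow_hasFDerivAt (c : ℝ) {x : E3} (hx : x ≠ 0) :
    HasFDerivAt (fun y : E3 => ‖y‖ ^ c)
      ((c * ‖x‖ ^ (c - 2)) • (innerSL ℝ x : E3 →L[ℝ] ℝ)) x := by
  have hnx : (0:ℝ) < ‖x‖ := norm_pos_iff.mpr hx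
  have h1 : HasFDerivAt (fun y : E3 => ‖y‖ ^ 2) (2 • (innerSL ℝ x : E3 →L[ℝ] ℝ)) x :=
    (hasStrictFDerivAt_norm_sq x).hasFDerivAt
  have h2 := h1.rpow_const (p := c / 2) (Or.inl (by positivity))
  have hfun : (fun y : E3 => (‖y‖ ^ 2) ^ (c / 2)) = fun y : E3 => ‖y‖ ^ c := by
    funext y
    rw [← Real.rpow_natCast ‖y‖ 2, ← Real.rpow_mul (norm_nonneg y)]
    congr 1; push_cast; ring
  have hsc : ((‖x‖ ^ 2 : ℝ)) ^ (c / 2 - 1) = ‖x‖ ^ (c - 2) := by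
    rw [← Real.rpow_natCast ‖x‖ 2, ← Real.rpow_mul (norm_nonneg x)]
    congr 1; push_cast; ring
  rw [hfun] at h2
  rw [hsc] at h2
  refine h2.congr_fderiv ?_
  ext v
  simp only [ContinuousLinearMap.smul_apply, smul_eq_mul, nsmul_eq_mul]
  ring

lemma pd_norm_rpow (c : ℝ) (i : Fin 3) {x : E3} (hx : x ≠ 0) :
    pd i (fun y : E3 => ‖y‖ ^ c) x = c * ‖x‖ ^ (c - 2) * x i := by
  unfold pd
  rw [(norm_rpow_hasFDerivAt c hx).fderiv]
  simp [EuclideanSpace.inner_single_right, real_inner_comm]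

lemma pd_mul (i : Fin 3) {f g : E3 → ℝ} {x : E3}
    (hf : DifferentiableAt ℝ f x) (hg : DifferentiableAt ℝ g x) :
    pd i (fun y => f y * g y) x = pd i f x * g x + f x * pd i g x := by
  unfold pd
  rw [fderiv_fun_mul hf hg]
  simp only [ContinuousLinearMap.add_apply, ContinuousLinearMap.smul_apply, smul_eq_mul]
  ring

lemma pd_add (i : Fin 3) {f g : E3 → ℝ} {x : E3}
    (hf : DifferentiableAt ℝ f x) (hg : DifferentiableAt ℝ g x) :
    pd i (fun y => f y + g y) x = pd i f x + pd i g x := by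
  unfold pd
  rw [fderiv_fun_add hf hg]
  simp

lemma pd_const_mul (i : Fin 3) (a : ℝ) {f : E3 → ℝ} {x : E3}
    (hf : DifferentiableAt ℝ f x) :
    pd i (fun y => a * f y) x = a * pd i f x := by
  unfold pd
  rw [fderiv_const_mul hf]
  simp

lemma pd_coord (i j : Fin 3) (x : E3) :
    pd i (fun y : E3 => y j) x = if i = j then 1 else 0 := by
  unfold pd
  have h : (fun y : E3 => y j) = (EuclideanSpace.proj j : E3 →L[ℝ] ℝ) := rfl
  rw [h, (EuclideanSpace.proj j : E3 →L[ℝ] ℝ).fderiv]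
  simp [EuclideanSpace.single_apply, eq_comm]

/-- for a homogeneous polynomial `p` of degree `m` and `s : ℤ`,
`Δ(‖x‖^s p) = ‖x‖^(s-2) (s(s+1+2m) p + ‖x‖² Δp)` away from the origin. -/
theorem stmt_0 (m : ℕ) (s : ℤ) (p : E3 → ℝ) (hp : IsHomogPoly m p)
    (x : E3) (hx : x ≠ 0) :
    lap (fun y => ‖y‖ ^ s * p y) x =
      ‖x‖ ^ (s - 2) *
        ((s : ℝ) * ((s : ℝ) + 1 + 2 * (m : ℝ)) * p x + ‖x‖ ^ 2 * lap p x) := by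
  obtain ⟨P, hP, hpe⟩ := hp
  have hpf : p = fun y : E3 => eval (fun i => y i) P := funext hpe
  subst hpf
  set f : E3 → ℝ := fun y : E3 => eval (fun i => y i) P with hfdef
  set q : Fin 3 → E3 → ℝ := fun i y => eval (fun j => y j) (pderiv i P) with hqdef
  have hnx : (0:ℝ) < ‖x‖ := norm_pos_iff.mpr hx
  set c : ℝ := (s : ℝ) with hc
  have hdf : Differentiable ℝ f := evalP_differentiable P
  have hdq : ∀ i, Differentiable ℝ (q i) := fun i => evalP_differentiable _
  have hpdf : ∀ i, pd i f = q i := fun i => pd_evalP P i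
  have hpdcoord : ∀ (i : Fin 3) (y : E3), pd i (fun z : E3 => z i) y = 1 := by
    intro i y; rw [pd_coord]; simp
  have hdn : ∀ (a : ℝ) (y : E3), y ≠ 0 → DifferentiableAt ℝ (fun z : E3 => ‖z‖ ^ a) y :=
    fun a y hy => (norm_rpow_hasFDerivAt a hy).differentiableAt
  have hdcoord : ∀ j : Fin 3, Differentiable ℝ (fun z : E3 => z j) :=
    fun j => (EuclideanSpace.proj j : E3 →L[ℝ] ℝ).differentiable
  have hFeq : (fun y : E3 => ‖y‖ ^ s * f y) = fun y : E3 => ‖y‖ ^ c * f y := by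
    funext y; rw [hc, Real.rpow_intCast]
  rw [hFeq]
  have hpd1 : ∀ i : Fin 3, ∀ y : E3, y ≠ 0 →
      pd i (fun z : E3 => ‖z‖ ^ c * f z) y
        = c * (‖y‖ ^ (c-2) * (y i * f y)) + ‖y‖ ^ c * q i y := by
    intro i y hy
    rw [pd_mul i (hdn c y hy) (hdf y), pd_norm_rpow c i hy, hpdf]
    ring
  have hpd2 : ∀ i : Fin 3,
      pd i (pd i (fun z : E3 => ‖z‖ ^ c * f z)) x
        = c * ((c-2) * ‖x‖ ^ (c-4) * x i * (x i * f x)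
              + ‖x‖ ^ (c-2) * (1 * f x + x i * q i x))
          + (c * ‖x‖ ^ (c-2) * x i * q i x + ‖x‖ ^ c * pd i (q i) x) := by
    intro i
    have hev : pd i (fun z : E3 => ‖z‖ ^ c * f z)
        =ᶠ[nhds x] fun y => c * (‖y‖ ^ (c-2) * (y i * f y)) + ‖y‖ ^ c * q i y := by
      filter_upwards [IsOpen.mem_nhds isOpen_compl_singleton hx] with y hy
      exact hpd1 i y hy
    have hsw : pd i (pd i (fun z : E3 => ‖z‖ ^ c * f z)) x
        = pd i (fun y => c * (‖y‖ ^ (c-2) * (y i * f y)) + ‖y‖ ^ c * q i y) x := by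
      have h5 : fderiv ℝ (pd i fun z : E3 => ‖z‖ ^ c * f z) x
          = fderiv ℝ (fun y => c * (‖y‖ ^ (c-2) * (y i * f y)) + ‖y‖ ^ c * q i y) x :=
        hev.fderiv_eq
      show fderiv ℝ (pd i fun z : E3 => ‖z‖ ^ c * f z) x (EuclideanSpace.single i 1) = _
      rw [h5]
      rfl
    rw [hsw]
    have d1 : DifferentiableAt ℝ (fun z : E3 => z i * f z) x := (hdcoord i x).mul (hdf x)
    have d2 : DifferentiableAt ℝ (fun z : E3 => ‖z‖ ^ (c-2) * (z i * f z)) x :=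
      (hdn _ x hx).mul d1
    have d3 : DifferentiableAt ℝ (fun z : E3 => c * (‖z‖ ^ (c-2) * (z i * f z))) x :=
      d2.const_mul c
    have d4 : DifferentiableAt ℝ (fun z : E3 => ‖z‖ ^ c * q i z) x := (hdn c x hx).mul (hdq i x)
    rw [pd_add i d3 d4, pd_const_mul i c d2,
        pd_mul i (hdn _ x hx) d1, pd_norm_rpow (c-2) i hx,
        pd_mul i (hdcoord i x) (hdf x), hpdcoord, hpdf,
        pd_mul i (hdn c x hx) (hdq i x), pd_norm_rpow c i hx,
        show c - 2 - 2 = c - 4 from by ring]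
  have hlap : lap f x = pd 0 (q 0) x + pd 1 (q 1) x + pd 2 (q 2) x := by
    simp [lap, hpdf, Fin.sum_univ_three]
  have hE := euler hP x
  rw [Fin.sum_univ_three] at hE
  have hnorm2 : ‖x‖ ^ 2 = x 0 * x 0 + x 1 * x 1 + x 2 * x 2 := by
    have h := real_inner_self_eq_norm_sq x
    rw [PiLp.inner_apply, Fin.sum_univ_three] at h
    rw [← h]
    simp [RCLike.inner_apply, conj_trivial]
    ring
  have hB2 : ‖x‖ ^ (c-4) * (x 0 * x 0 + x 1 * x 1 + x 2 * x 2) = ‖x‖ ^ (c-2) := by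
    rw [← hnorm2, ← Real.rpow_natCast ‖x‖ 2, ← Real.rpow_add hnx]
    congr 1; push_cast; ring
  have hC2 : ‖x‖ ^ c = ‖x‖ ^ (c-2) * (x 0 * x 0 + x 1 * x 1 + x 2 * x 2) := by
    rw [← hnorm2, ← Real.rpow_natCast ‖x‖ 2, ← Real.rpow_add hnx]
    congr 1; push_cast; ring
  have hS : (‖x‖:ℝ) ^ (s-2) = ‖x‖ ^ (c-2) := by
    rw [← Real.rpow_intCast ‖x‖ (s-2)]
    congr 1; push_cast; ring
  rw [hS, hlap, hnorm2]
  show (∑ i : Fin 3, pd i (pd i fun z : E3 => ‖z‖ ^ c * f z) x) = _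
  rw [Fin.sum_univ_three, hpd2 0, hpd2 1, hpd2 2]
  linear_combination (c*(c-2)*(f x)) * hB2 + (2*c*‖x‖ ^ (c-2)) * hE
    + (pd 0 (q 0) x + pd 1 (q 1) x + pd 2 (q 2) x) * hC2
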